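/- arXiv:2211.09415 — 2 statements merged into one kernel-verified Lean document; each statement's English description precedes it below -/
import Mathlib

section
/- Let x ∈ V, x ≠ s, with G \ {x} connected and x not a leaf of T, and let R(x) and r(x) be as defined (R(x) is nonempty since u_{H_x} ∈ R(x)). If y is a vertex lying on π(s, u_{H_x}) strictly below r(x) (i.e., r(x) is a proper ancestor of y), then the source s is connected to the heavy component H_x in G \ {x,y}: there is a path in G avoiding both x and y from s to a vertex of H_x. -/
/-- A rooted spanning tree of the graph `G`, given by a root and a parent function:
the root is a fixed point of `parent`, every vertex reaches the root by iterating
`parent`, and every (parent, child) pair is an edge of `G`. -/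
structure RSTree {V : Type*} (G : SimpleGraph V) where
  root : V
  parent : V → V
  parent_root : parent root = root
  reaches : ∀ v : V, ∃ n : ℕ, parent^[n] v = root
  adj : ∀ v : V, v ≠ root → G.Adj (parent v) v

namespace RSTree

variable {V : Type*} {G : SimpleGraph V}

/-- `u` is an ancestor of `v` in `T`, i.e. `u` lies on the tree path `π(root, v)`;
includes `u = v`. -/
def Anc (T : RSTree G) (u v : V) : Prop := ∃ n : ℕ, T.parent^[n] v = u

/-- The vertex set `V(T_x)` of the subtree of `T` rooted at `x`. -/
def sub (T : RSTree G) (x : V) : Set V := {v | T.Anc x v}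

/-- `c` is a child of `v` in `T`. -/
def IsChild (T : RSTree G) (c v : V) : Prop := T.parent c = v ∧ c ≠ v

/-- `V_x = V(T_x) \ {x}`. -/
def Vx (T : RSTree G) (x : V) : Set V := {v | T.Anc x v ∧ v ≠ x}

end RSTree

/-- `v` and `w` are connected by a walk of `G` all of whose vertices lie in `S`
(i.e. they lie in the same connected component of the induced subgraph `G[S]`). -/
def ReachableWithin {V : Type*} (G : SimpleGraph V) (S : Set V) (v w : V) : Prop :=
  ∃ p : G.Walk v w, ∀ u ∈ p.support, u ∈ S

/-- `C` is (the vertex set of) a connected component of the induced subgraph `G[S]`. -/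
def IsCompOf {V : Type*} (G : SimpleGraph V) (S : Set V) (C : Set V) : Prop :=
  ∃ v ∈ S, C = {w | ReachableWithin G S v w}

/-- The connected component of `v` in the induced subgraph `G[S]` (as a vertex set). -/
def CompOfVert {V : Type*} (G : SimpleGraph V) (S : Set V) (v : V) : Set V :=
  {w | ReachableWithin G S v w}

/-- The vertex set of the path `π_x(s,C) = π(s, u_C) ∘ (u_C, v_C)` associated to a
component `C` (given the choice functions `uc, vc` of the edge `(u_C, v_C)`): it
consists of all ancestors of `u_C` together with `v_C`. -/
def CompPath {V : Type*} {G : SimpleGraph V} (T : RSTree G)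
    (uc vc : Set V → V) (C : Set V) : Set V :=
  {w | T.Anc w (uc C)} ∪ {vc C}

/-- `C ∈ 𝒞_x` is pseudo-`y`-sensitive: the path `π_x(s,C)` contains a tree edge
`(y, y')` from `y` to a child `y'` of `y` such that `x` does not lie on
`π_y(s, C_{y,y'})`. Here `ucx, vcx` are the edge choices for components of `G[V_x]`
and `ucy, vcy` those for components of `G[V_y]`. -/
def PseudoSens {V : Type*} {G : SimpleGraph V} (T : RSTree G)
    (ucx vcx ucy vcy : Set V → V) (x y : V) (C : Set V) : Prop :=
  ∃ y', T.IsChild y' y ∧ T.Anc y' (ucx C) ∧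
    x ∉ CompPath T ucy vcy (CompOfVert G (T.Vx y) y')

/-- `C ∈ 𝒞_x` is fully-`y`-sensitive: `y` lies on `π_x(s,C)` (i.e. `C` is
`y`-sensitive) and `C` is not pseudo-`y`-sensitive. -/
def FullySens {V : Type*} {G : SimpleGraph V} (T : RSTree G)
    (ucx vcx ucy vcy : Set V → V) (x y : V) (C : Set V) : Prop :=
  y ∈ CompPath T ucx vcx C ∧ ¬ PseudoSens T ucx vcx ucy vcy x y C

/-- `hch` is a valid designation of heavy children: for every non-leaf vertex `v`,
`hch v` is a child of `v` whose subtree has the maximum number of vertices among all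
children of `v`. -/
def HchValid {V : Type*} {G : SimpleGraph V} (T : RSTree G) (hch : V → V) : Prop :=
  ∀ v : V, (∃ c, T.IsChild c v) →
    T.IsChild (hch v) v ∧ ∀ c, T.IsChild c v → (T.sub c).ncard ≤ (T.sub (hch v)).ncard

/-- The family `uc, vc` of edge choices is valid: for every `x ≠ s` with `G \ {x}`
connected and every connected component `C` of `G[V_x]`, `(uc x C, vc x C)` is an edge
of `G` with `vc x C ∈ C` and `uc x C ∉ V(T_x)`. -/
def GoodChoice {V : Type*} (G : SimpleGraph V) (T : RSTree G)
    (uc vc : V → Set V → V) : Prop :=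
  ∀ x : V, x ≠ T.root → (G.induce (({x} : Set V)ᶜ)).Connected →
    ∀ C, IsCompOf G (T.Vx x) C →
      G.Adj (uc x C) (vc x C) ∧ vc x C ∈ C ∧ uc x C ∉ T.sub x

/-- `x, y` is a heavy pair: an independent pair, both non-leaves of `T`, both `≠ s`,
with `G \ {x}` and `G \ {y}` connected, such that every fully-`y`-sensitive component
`C ∈ FS(x,y)` has the tree edge `(y, y_h)` on `π_x(s,C)` and every fully-`x`-sensitive
component `C ∈ FS(y,x)` has the tree edge `(x, x_h)` on `π_y(s,C)`. -/
def HeavyPair {V : Type*} {G : SimpleGraph V} (T : RSTree G) (hch : V → V)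
    (uc vc : V → Set V → V) (x y : V) : Prop :=
  x ≠ T.root ∧ y ≠ T.root ∧ ¬ T.Anc x y ∧ ¬ T.Anc y x ∧
  T.IsChild (hch x) x ∧ T.IsChild (hch y) y ∧
  (G.induce (({x} : Set V)ᶜ)).Connected ∧ (G.induce (({y} : Set V)ᶜ)).Connected ∧
  (∀ C, IsCompOf G (T.Vx x) C → FullySens T (uc x) (vc x) (uc y) (vc y) x y C →
    T.Anc (hch y) (uc x C)) ∧
  (∀ C, IsCompOf G (T.Vx y) C → FullySens T (uc y) (vc y) (uc x) (vc x) y x C →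
    T.Anc (hch x) (uc y C))

namespace RSTree

variable {V : Type*} {G : SimpleGraph V}

lemma anc_refl (T : RSTree G) (v : V) : T.Anc v v := ⟨0, rfl⟩

lemma anc_trans {T : RSTree G} {u v w : V} (h1 : T.Anc u v) (h2 : T.Anc v w) :
    T.Anc u w := by
  obtain ⟨n, hn⟩ := h1; obtain ⟨m, hm⟩ := h2
  exact ⟨n + m, by rw [Function.iterate_add_apply, hm, hn]⟩

lemma root_fixed (T : RSTree G) (n : ℕ) : T.parent^[n] T.root = T.root := by
  induction n with
  | zero => rfl
  | succ n ih => rw [Function.iterate_succ_apply', ih, T.parent_root]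

lemma periodic_eq_root {T : RSTree G} {v : V} {k : ℕ} (hk : 0 < k)
    (h : T.parent^[k] v = v) : v = T.root := by
  obtain ⟨N, hN⟩ := T.reaches v
  have hmul : ∀ j : ℕ, T.parent^[j * k] v = v := by
    intro j; induction j with
    | zero => simp
    | succ j ih => rw [Nat.succ_mul, Function.iterate_add_apply, h, ih]
  have hkey : T.parent^[(N+1) * k] v = T.root := by
    have h1 : N ≤ (N+1)*k := by nlinarith
    calc T.parent^[(N+1)*k] v = T.parent^[(N+1)*k - N] (T.parent^[N] v) := by
          rw [← Function.iterate_add_apply]; congr 1; omega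
      _ = T.root := by rw [hN, root_fixed]
  rw [hmul (N+1)] at hkey; exact hkey

lemma anc_antisymm {T : RSTree G} {u v : V} (h1 : T.Anc u v) (h2 : T.Anc v u) :
    u = v := by
  obtain ⟨n, hn⟩ := h1; obtain ⟨m, hm⟩ := h2
  rcases Nat.eq_zero_or_pos (m + n) with h | h
  · have hn0 : n = 0 := by omega
    rw [hn0] at hn; exact hn.symm
  · have hper : T.parent^[m + n] v = v := by
      rw [Function.iterate_add_apply, hn, hm]
    have hv : v = T.root := periodic_eq_root h hper
    have hu : u = T.root := by rw [← hn, hv, root_fixed]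
    rw [hu, hv]

lemma exists_walk_aux (T : RSTree G) : ∀ (n : ℕ) (v : V), T.parent^[n] v = T.root →
    ∃ p : G.Walk T.root v, ∀ u ∈ p.support, T.Anc u v := by
  intro n
  induction n with
  | zero =>
    intro v h
    simp only [Function.iterate_zero_apply] at h
    subst h
    exact ⟨SimpleGraph.Walk.nil, by simp [anc_refl]⟩
  | succ n ih =>
    intro v h
    by_cases hv : v = T.root
    · subst hv
      exact ⟨SimpleGraph.Walk.nil, by simp [anc_refl]⟩
    · rw [Function.iterate_succ_apply] at h
      obtain ⟨p, hp⟩ := ih (T.parent v) h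
      refine ⟨p.concat (T.adj v hv), ?_⟩
      intro u hu
      rw [SimpleGraph.Walk.support_concat,
        List.mem_append] at hu
      rcases hu with hu | hu
      · exact anc_trans (hp u hu) ⟨1, by simp⟩
      · simp at hu; subst hu; exact anc_refl T u

end RSTree

/-- Let `x ≠ s` with `G \ {x}` connected and `x` not a leaf of `T`,
let `H_x` be the heavy component of `x`, let
`R(x) = {v ∉ V(T_x) : v has a G-neighbor in H_x}` (nonempty since `u_{H_x} ∈ R(x)`),
and let `r(x)` be the lowest common ancestor of `R(x)`: an ancestor `r₀` of every
vertex of `R(x)` such that every common ancestor of `R(x)` is an ancestor of `r₀`.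
If `y` lies on `π(s, u_{H_x})` strictly below `r(x)` (i.e. `r(x)` is a proper
ancestor of `y`), then the source `s` is connected to `H_x` in `G \ {x,y}`: there is
a path in `G` avoiding both `x` and `y` from `s` to a vertex of `H_x`. -/
theorem stmt12 {V : Type*} [Fintype V] (G : SimpleGraph V) (hG : G.Connected)
    (T : RSTree G) (hch : V → V) (hhch : HchValid T hch)
    (uc vc : V → Set V → V) (hgood : GoodChoice G T uc vc)
    (x : V) (hxs : x ≠ T.root)
    (hx : (G.induce (({x} : Set V)ᶜ)).Connected)
    (hxh : T.IsChild (hch x) x)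
    (r0 : V)
    (hr1 : ∀ a : V,
      (a ∉ T.sub x ∧ ∃ b ∈ CompOfVert G (T.Vx x) (hch x), G.Adj a b) → T.Anc r0 a)
    (hr2 : ∀ w : V,
      (∀ a : V, (a ∉ T.sub x ∧ ∃ b ∈ CompOfVert G (T.Vx x) (hch x), G.Adj a b) →
        T.Anc w a) → T.Anc w r0)
    (y : V)
    (hy1 : T.Anc y (uc x (CompOfVert G (T.Vx x) (hch x))))
    (hy2 : T.Anc r0 y) (hy3 : y ≠ r0) :
    ∃ b ∈ CompOfVert G (T.Vx x) (hch x),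
      ReachableWithin G (({x, y} : Set V)ᶜ) T.root b := by
  set H := CompOfVert G (T.Vx x) (hch x) with hH
  have hmem : hch x ∈ T.Vx x := ⟨⟨1, by simp [hxh.1]⟩, hxh.2⟩
  have hcomp : IsCompOf G (T.Vx x) H := ⟨hch x, hmem, rfl⟩
  obtain ⟨hadj, hvc, huc⟩ := hgood x hxs hx H hcomp
  have hysub : y ∉ T.sub x := fun hxy => huc (RSTree.anc_trans hxy hy1)
  have key : ∃ a, (a ∉ T.sub x ∧ ∃ b ∈ H, G.Adj a b) ∧ ¬ T.Anc y a := by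
    by_contra hcon
    push_neg at hcon
    exact hy3 (RSTree.anc_antisymm (hr2 y (fun a ha => hcon a ha)) hy2)
  obtain ⟨a, ⟨hax, b, hbH, hab⟩, hya⟩ := key
  obtain ⟨n, hn⟩ := T.reaches a
  obtain ⟨p, hp⟩ := RSTree.exists_walk_aux T n a hn
  have hbVx : b ∈ T.Vx x := by
    obtain ⟨q, hq⟩ := hbH
    exact hq b q.end_mem_support
  refine ⟨b, hbH, p.concat hab, ?_⟩
  intro u hu
  rw [SimpleGraph.Walk.support_concat, List.mem_append] at hu
  have hgoal : u ≠ x ∧ u ≠ y := by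
    rcases hu with hu | hu
    · have hua := hp u hu
      constructor
      · rintro rfl; exact hax hua
      · rintro rfl; exact hya hua
    · simp at hu; subst hu
      exact ⟨hbVx.2, fun h => hysub (h ▸ hbVx.1)⟩
  simp only [Set.mem_compl_iff, Set.mem_insert_iff, Set.mem_singleton_iff]
  tauto
end

section
/- Suppose the rooted tree T has depth at most D (every root-to-vertex path has at most D edges). Then for every vertex v ∈ V, the number of ordered pairs (x,y) of vertices such that v ∈ LDS(x,y) is at most log₂(n) · (D+2). (Indeed, v ∈ LDS(x,y) forces x to be a light ancestor of v—at most log₂(n) choices—and y to be one of the at most D+2 vertices of π_x(s, C_{x,v}).) -/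
/-- `u` is a light ancestor of `v`: `u` lies on the root-to-`v` path, `u ≠ v`, and the
edge of this path leaving `u` towards `v` goes to a child `c` of `u` with
`c ≠ hch u`. -/
def LightAnc {V : Type*} {G : SimpleGraph V} (T : RSTree G) (hch : V → V)
    (u v : V) : Prop :=
  ∃ c : V, T.parent c = u ∧ c ≠ u ∧ T.Anc c v ∧ c ≠ hch u


section Aux

namespace RSTree

variable {V : Type*} {G : SimpleGraph V} (T : RSTree G)

lemma anc_refl_s14 (a : V) : T.Anc a a := ⟨0, rfl⟩

lemma anc_trans_s14 {a b c : V} : T.Anc a b → T.Anc b c → T.Anc a c := by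
  rintro ⟨n, hn⟩ ⟨m, hm⟩
  exact ⟨n + m, by rw [Function.iterate_add_apply, hm, hn]⟩

lemma root_iter (n : ℕ) : T.parent^[n] T.root = T.root :=
  Function.iterate_fixed T.parent_root n

lemma anc_antisymm_s14 {a b : V} : T.Anc a b → T.Anc b a → a = b := by
  rintro ⟨n, hn⟩ ⟨m, hm⟩
  rcases Nat.eq_zero_or_pos (m + n) with h0 | hpos
  · obtain ⟨hm0, hn0⟩ := Nat.add_eq_zero.mp h0
    subst hm0; subst hn0; rw [← hn, ← hm]; rfl
  · have hper : T.parent^[m + n] b = b := by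
      rw [Function.iterate_add_apply, hn, hm]
    have hk : ∀ k : ℕ, T.parent^[(m + n) * k] b = b := by
      intro k
      induction k with
      | zero => rfl
      | succ k ih => rw [Nat.mul_succ, Function.iterate_add_apply, hper, ih]
    obtain ⟨N, hN⟩ := T.reaches b
    have hge : N ≤ (m + n) * N := Nat.le_mul_of_pos_left N hpos
    have hb : b = T.root := by
      have := hk N
      rw [← Nat.sub_add_cancel hge, Function.iterate_add_apply, hN, root_iter] at this
      exact this.symm
    subst hb
    rw [root_iter] at hn
    exact hn.symm

lemma anc_total {a b w : V} (ha : T.Anc a w) (hb : T.Anc b w) :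
    T.Anc a b ∨ T.Anc b a := by
  obtain ⟨n, hn⟩ := ha; obtain ⟨m, hm⟩ := hb
  rcases le_total n m with h | h
  · refine Or.inr ⟨m - n, ?_⟩
    rw [← hn, ← Function.iterate_add_apply, Nat.sub_add_cancel h, hm]
  · refine Or.inl ⟨n - m, ?_⟩
    rw [← hm, ← Function.iterate_add_apply, Nat.sub_add_cancel h, hn]

lemma anc_parent (c : V) : T.Anc (T.parent c) c := ⟨1, rfl⟩

lemma sub_mono {a b : V} (h : T.Anc a b) : T.sub b ⊆ T.sub a :=
  fun _ hw => T.anc_trans_s14 h hw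

lemma anc_child_cases {c u a : V} (hc : T.IsChild c u) (h : T.Anc a c) :
    a = c ∨ T.Anc a u := by
  obtain ⟨n, hn⟩ := h
  cases n with
  | zero => exact Or.inl hn.symm
  | succ k => exact Or.inr ⟨k, by rw [← hn, Function.iterate_succ_apply, hc.1]⟩

lemma children_disjoint {c c' u : V} (hc : T.IsChild c u) (hc' : T.IsChild c' u)
    (hne : c ≠ c') : Disjoint (T.sub c) (T.sub c') := by
  rw [Set.disjoint_left]
  intro w hw hw'
  rcases T.anc_total hw hw' with h | h
  · rcases T.anc_child_cases hc' h with h | h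
    · exact hne h
    · exact hc.2 (T.anc_antisymm_s14 h (hc.1 ▸ T.anc_parent c))
  · rcases T.anc_child_cases hc h with h | h
    · exact hne h.symm
    · exact hc'.2 (T.anc_antisymm_s14 h (hc'.1 ▸ T.anc_parent c'))

lemma exists_top {v : V} (S : Finset V) (hanc : ∀ x ∈ S, T.Anc x v)
    (hne : S.Nonempty) : ∃ u ∈ S, ∀ u' ∈ S, T.Anc u u' := by
  classical
  revert hanc hne
  induction S using Finset.induction_on with
  | empty => intro _ hne; exact absurd hne (by simp)
  | @insert a S ha IH =>
    intro hanc hne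
    rcases S.eq_empty_or_nonempty with rfl | hSne
    · exact ⟨a, by simp, by simp [T.anc_refl_s14]⟩
    · obtain ⟨u, huS, hmax⟩ := IH (fun x hx => hanc x (Finset.mem_insert_of_mem hx)) hSne
      rcases T.anc_total (hanc a (Finset.mem_insert_self a S)) (hanc u (Finset.mem_insert_of_mem huS)) with h | h
      · refine ⟨a, Finset.mem_insert_self a S, ?_⟩
        intro u' hu'
        rcases Finset.mem_insert.mp hu' with rfl | hu'
        · exact T.anc_refl_s14 _
        · exact T.anc_trans_s14 h (hmax u' hu')
      · refine ⟨u, Finset.mem_insert_of_mem huS, ?_⟩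
        intro u' hu'
        rcases Finset.mem_insert.mp hu' with rfl | hu'
        · exact h
        · exact hmax u' hu'

end RSTree

lemma lightAnc_anc {V : Type*} {G : SimpleGraph V} (T : RSTree G) (hch : V → V)
    {u v : V} (h : LightAnc T hch u v) : T.Anc u v := by
  obtain ⟨c, hcp, _, hcv, _⟩ := h
  exact T.anc_trans_s14 ⟨1, by simpa using hcp⟩ hcv

lemma two_pow_card_le {V : Type*} [Fintype V] {G : SimpleGraph V} (T : RSTree G)
    (hch : V → V) (hhch : HchValid T hch) (v : V) (S : Finset V)
    (hlight : ∀ x ∈ S, LightAnc T hch x v) (hne : S.Nonempty) :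
    ∃ u ∈ S, 2 ^ S.card ≤ (T.sub u).ncard := by
  classical
  revert hlight hne
  induction S using Finset.strongInduction with
  | _ S IH =>
    intro hlight hne
    obtain ⟨u, huS, hmax⟩ := T.exists_top S (fun x hx => lightAnc_anc T hch (hlight x hx)) hne
    obtain ⟨c, hcp, hcne, hcv, hcl⟩ := hlight u huS
    have hchild : T.IsChild c u := ⟨hcp, hcne⟩
    have hhu := hhch u ⟨c, hchild⟩
    have hcard : (S.erase u).card + 1 = S.card := Finset.card_erase_add_one huS
    refine ⟨u, huS, ?_⟩
    rcases (S.erase u).eq_empty_or_nonempty with hS' | hS'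
    · have hc0 : (S.erase u).card = 0 := by rw [hS']; rfl
      have h1 : S.card = 1 := by omega
      rw [h1, pow_one]
      have hpair : ({c, u} : Set V) ⊆ T.sub u := by
        intro w hw
        simp only [Set.mem_insert_iff, Set.mem_singleton_iff] at hw
        rcases hw with rfl | rfl
        · exact ⟨1, by simpa using hcp⟩
        · exact T.anc_refl_s14 _
      have hle := Set.ncard_le_ncard hpair (Set.toFinite _)
      rwa [Set.ncard_pair hcne] at hle
    · obtain ⟨u', hu'S', h2⟩ := IH (S.erase u) (Finset.erase_ssubset huS)
        (fun x hx => hlight x (Finset.mem_of_mem_erase hx)) hS'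
      have hu'S : u' ∈ S := Finset.mem_of_mem_erase hu'S'
      have hu'ne : u' ≠ u := Finset.ne_of_mem_erase hu'S'
      have hanc : T.Anc u u' := hmax u' hu'S
      have hu'v : T.Anc u' v := lightAnc_anc T hch (hlight u' hu'S)
      have hcu' : T.Anc c u' := by
        rcases T.anc_total hcv hu'v with h | h
        · exact h
        · rcases T.anc_child_cases hchild h with h | h
          · exact h ▸ T.anc_refl_s14 u'
          · exact absurd (T.anc_antisymm_s14 hanc h).symm hu'ne
      have hle1 : (T.sub u').ncard ≤ (T.sub c).ncard :=
        Set.ncard_le_ncard (T.sub_mono hcu') (Set.toFinite _)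
      have hle2 : (T.sub c).ncard ≤ (T.sub (hch u)).ncard := hhu.2 c hchild
      have hdisj : Disjoint (T.sub c) (T.sub (hch u)) :=
        T.children_disjoint hchild hhu.1 hcl
      have hunion : T.sub c ∪ T.sub (hch u) ⊆ T.sub u := by
        apply Set.union_subset
        · exact T.sub_mono ⟨1, by simpa using hcp⟩
        · exact T.sub_mono ⟨1, by simpa using hhu.1.1⟩
      have heq : (T.sub c ∪ T.sub (hch u)).ncard
          = (T.sub c).ncard + (T.sub (hch u)).ncard :=
        Set.ncard_union_eq hdisj (Set.toFinite _) (Set.toFinite _)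
      have hle3 : (T.sub c ∪ T.sub (hch u)).ncard ≤ (T.sub u).ncard :=
        Set.ncard_le_ncard hunion (Set.toFinite _)
      have hpow : 2 ^ S.card = 2 * 2 ^ (S.erase u).card := by
        rw [← hcard, pow_succ, mul_comm]
      omega

end Aux

/-- Suppose the rooted tree `T` has depth at most `D`. Then for every
vertex `v`, the number of ordered pairs `(x,y)` of vertices (with `x ≠ s` and `G \ {x}`
connected, so that the data `𝒞_x`, `π_x` are defined) such that `v ∈ LDS(x,y)` — i.e.
`x` is a light ancestor of `v` and `y` lies on `π_x(s, C_{x,v})` — is at most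
`log₂(n) · (D+2)`: `x` must be one of the at most `log₂ n` light ancestors of `v`, and
`y` one of the at most `D+2` vertices of `π_x(s, C_{x,v})`. -/
theorem stmt14 {V : Type*} [Fintype V] (G : SimpleGraph V) (hG : G.Connected)
    (T : RSTree G) (hch : V → V) (hhch : HchValid T hch)
    (uc vc : V → Set V → V) (hgood : GoodChoice G T uc vc)
    (D : ℕ) (hdepth : ∀ v : V, ∃ n ≤ D, T.parent^[n] v = T.root)
    (v : V) :
    ({p : V × V | p.1 ≠ T.root ∧ (G.induce (({p.1} : Set V)ᶜ)).Connected ∧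
        LightAnc T hch p.1 v ∧
        p.2 ∈ CompPath T (uc p.1) (vc p.1) (CompOfVert G (T.Vx p.1) v)}.ncard : ℝ)
      ≤ Real.logb 2 (Fintype.card V) * (D + 2) := by
  classical
  have hnV : Nonempty V := ⟨v⟩
  -- the path finsets
  set u0 : V → V := fun x => uc x (CompOfVert G (T.Vx x) v) with hu0
  set v0 : V → V := fun x => vc x (CompOfVert G (T.Vx x) v) with hv0
  set Pfin : V → Finset V :=
    fun x => (Finset.Iic D).image (fun k => T.parent^[k] (u0 x)) ∪ {v0 x} with hPfin
  have hPcard : ∀ x : V, (Pfin x).card ≤ D + 2 := by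
    intro x
    calc (Pfin x).card
        ≤ ((Finset.Iic D).image (fun k => T.parent^[k] (u0 x))).card + ({v0 x} : Finset V).card :=
          Finset.card_union_le _ _
      _ ≤ (Finset.Iic D).card + 1 := by
          gcongr
          · exact Finset.card_image_le
          · exact le_rfl
      _ = D + 2 := by rw [Nat.card_Iic]
  -- the light ancestors
  have hLAfin : ({x : V | LightAnc T hch x v}).Finite := Set.toFinite _
  set LAfin : Finset V := hLAfin.toFinset with hLA
  have hpow : 2 ^ LAfin.card ≤ Fintype.card V := by
    rcases LAfin.eq_empty_or_nonempty with h | h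
    · rw [h]
      rw [Finset.card_empty, pow_zero]; exact Fintype.card_pos (α := V)
    · obtain ⟨u, _, h2⟩ := two_pow_card_le T hch hhch v LAfin
        (fun x hx => by simpa [hLA, Set.Finite.mem_toFinset] using hx) h
      refine h2.trans ?_
      have hle := Set.ncard_le_ncard (Set.subset_univ (T.sub u)) (Set.toFinite _)
      rwa [Set.ncard_univ, Nat.card_eq_fintype_card] at hle
  have hlogb : (LAfin.card : ℝ) ≤ Real.logb 2 (Fintype.card V) := by
    have h1 : ((2 : ℝ)) ^ LAfin.card ≤ (Fintype.card V : ℝ) := by exact_mod_cast hpow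
    have h2 : Real.logb 2 ((2 : ℝ) ^ LAfin.card) ≤ Real.logb 2 (Fintype.card V) :=
      Real.logb_le_logb_of_le (by norm_num) (by positivity) h1
    rwa [Real.logb_pow, Real.logb_self_eq_one (by norm_num : (1:ℝ) < 2), mul_one] at h2
  -- counting the set
  have hSfin : ({p : V × V | p.1 ≠ T.root ∧ (G.induce (({p.1} : Set V)ᶜ)).Connected ∧
      LightAnc T hch p.1 v ∧
      p.2 ∈ CompPath T (uc p.1) (vc p.1) (CompOfVert G (T.Vx p.1) v)}).Finite :=
    Set.toFinite _
  have hsub : hSfin.toFinset ⊆ LAfin.biUnion (fun x => ({x} : Finset V) ×ˢ Pfin x) := by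
    intro p hp
    rw [Set.Finite.mem_toFinset] at hp
    obtain ⟨hp1, hp2, hp3, hp4⟩ := hp
    rw [Finset.mem_biUnion]
    refine ⟨p.1, by simpa [hLA, Set.Finite.mem_toFinset] using hp3, ?_⟩
    rw [Finset.mem_product, Finset.mem_singleton]
    refine ⟨rfl, ?_⟩
    simp only [CompPath, Set.mem_union, Set.mem_setOf_eq, Set.mem_singleton_iff] at hp4
    rw [hPfin, Finset.mem_union]
    rcases hp4 with h | h
    · left
      rw [Finset.mem_image]
      obtain ⟨k, hk⟩ := h
      obtain ⟨m, hm, hroot⟩ := hdepth (u0 p.1)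
      rcases le_or_gt k D with hkD | hkD
      · exact ⟨k, Finset.mem_Iic.mpr hkD, hk⟩
      · refine ⟨m, Finset.mem_Iic.mpr hm, ?_⟩
        have hkr : T.parent^[k] (u0 p.1) = T.root := by
          rw [← Nat.sub_add_cancel (le_of_lt (lt_of_le_of_lt hm hkD)),
            Function.iterate_add_apply, hroot, T.root_iter]
        rw [hroot, ← hk, hkr]
    · right
      rw [Finset.mem_singleton]
      exact h
  have hcount : hSfin.toFinset.card ≤ LAfin.card * (D + 2) := by
    calc hSfin.toFinset.card ≤ (LAfin.biUnion (fun x => ({x} : Finset V) ×ˢ Pfin x)).card :=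
          Finset.card_le_card hsub
      _ ≤ ∑ x ∈ LAfin, (({x} : Finset V) ×ˢ Pfin x).card := Finset.card_biUnion_le
      _ ≤ ∑ x ∈ LAfin, (D + 2) := by
          refine Finset.sum_le_sum fun x _ => ?_
          rw [Finset.card_product, Finset.card_singleton, one_mul]
          exact hPcard x
      _ = LAfin.card * (D + 2) := by rw [Finset.sum_const, smul_eq_mul]
  have hncard : ({p : V × V | p.1 ≠ T.root ∧ (G.induce (({p.1} : Set V)ᶜ)).Connected ∧
      LightAnc T hch p.1 v ∧
      p.2 ∈ CompPath T (uc p.1) (vc p.1) (CompOfVert G (T.Vx p.1) v)}).ncard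
      = hSfin.toFinset.card := Set.ncard_eq_toFinset_card _ hSfin
  rw [hncard]
  calc (hSfin.toFinset.card : ℝ) ≤ (LAfin.card : ℝ) * (D + 2) := by exact_mod_cast hcount
    _ ≤ Real.logb 2 (Fintype.card V) * (D + 2) := by
        apply mul_le_mul_of_nonneg_right hlogb
        positivity
end
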